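/- arXiv:2505.10379 — 3 statements merged into one kernel-verified Lean document; each statement's English description precedes it below -/
import Mathlib

section
/- Let h be a symmetric endomorphism of a 3-dimensional real inner product space V, let R ∈ V be a unit vector with h(R) = 0, and let φ be a skew-symmetric endomorphism with φ(R) = 0, φ² = -id on the orthogonal complement of R, and hφ + φh = 0. Then h is orthogonally diagonalizable with eigenvalues (0, μ, -μ) for some μ ≥ 0, and ‖h‖² = 2μ² (Frobenius norm). -/
open scoped RealInnerProductSpace

/-- Let `h` be a symmetric endomorphism of a 3-dimensional real inner
product space `V`, `R` a unit vector with `h R = 0`, and `φ` a skew-symmetric endomorphism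
with `φ R = 0`, `φ² = -id` on the orthogonal complement of `R`, and `hφ + φh = 0`.  Then `h`
is orthogonally diagonalizable with eigenvalues `(0, μ, -μ)` for some `μ ≥ 0`, and its
Frobenius norm satisfies `‖h‖² = trace (h ∘ adjoint h) = 2μ²`. -/
theorem symmetric_anticommuting_orthogonally_diagonalizable
    {V : Type*} [NormedAddCommGroup V] [InnerProductSpace ℝ V] [FiniteDimensional ℝ V]
    (hdim : Module.finrank ℝ V = 3)
    (h φ : V →ₗ[ℝ] V)
    (hsymm : ∀ v w : V, ⟪h v, w⟫ = ⟪v, h w⟫)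
    (R : V) (hRunit : ‖R‖ = 1) (hhR : h R = 0)
    (hφskew : ∀ v w : V, ⟪φ v, w⟫ = -⟪v, φ w⟫)
    (hφR : φ R = 0)
    (hφ2 : ∀ v : V, ⟪R, v⟫ = 0 → φ (φ v) = -v)
    (hanticomm : ∀ v : V, h (φ v) + φ (h v) = 0) :
    ∃ μ : ℝ, 0 ≤ μ ∧
      (∃ b : OrthonormalBasis (Fin 3) ℝ V,
        h (b 0) = 0 ∧ h (b 1) = μ • b 1 ∧ h (b 2) = -μ • b 2) ∧
      LinearMap.trace ℝ V (h ∘ₗ LinearMap.adjoint h) = 2 * μ ^ 2 := by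
  have hRne : R ≠ 0 := by
    intro h0; rw [h0, norm_zero] at hRunit; norm_num at hRunit
  set W : Submodule ℝ V := (ℝ ∙ R)ᗮ with hWdef
  have memW : ∀ v : V, v ∈ W ↔ ⟪R, v⟫ = 0 := fun v =>
    Submodule.mem_orthogonal_singleton_iff_inner_right
  have hWdim : Module.finrank ℝ W = 2 := by
    have h1 : Module.finrank ℝ (ℝ ∙ R) = 1 := finrank_span_singleton hRne
    have h2 : Module.finrank ℝ (ℝ ∙ R) + Module.finrank ℝ W = Module.finrank ℝ V :=
      Submodule.finrank_add_finrank_orthogonal (ℝ ∙ R)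
    omega
  have hinv : ∀ v ∈ W, h v ∈ W := by
    intro v hv
    rw [memW] at hv ⊢
    rw [← hsymm R v, hhR, inner_zero_left]
  have hsymm' : (h.restrict hinv).IsSymmetric := by
    intro x y
    simp only [Submodule.coe_inner, LinearMap.restrict_coe_apply]
    exact hsymm x y
  set e : W := hsymm'.eigenvectorBasis hWdim 0 with he
  set lam : ℝ := hsymm'.eigenvalues hWdim 0 with hlam
  have heig := hsymm'.hasEigenvector_eigenvectorBasis hWdim 0
  set u : V := (e : V) with hu
  have hu_perp : ⟪R, u⟫ = 0 := (memW u).mp e.2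
  have hu_norm : ‖u‖ = 1 := by
    have := (hsymm'.eigenvectorBasis hWdim).orthonormal.1 0
    simpa [← he] using this
  have hu_eig : h u = lam • u := by
    have := heig.apply_eq_smul
    exact congrArg (Subtype.val) this
  set v : V := φ u with hv
  have hv_perp : ⟪R, v⟫ = 0 := by
    have := hφskew R u
    rw [hφR, inner_zero_left] at this
    linarith
  have hv_inner : ⟪v, v⟫ = 1 := by
    have h1 := hφskew u (φ u)
    rw [hφ2 u hu_perp, inner_neg_right, neg_neg] at h1
    rw [hv, h1, real_inner_self_eq_norm_mul_norm, hu_norm]; ring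
  have hv_norm : ‖v‖ = 1 := by
    rw [real_inner_self_eq_norm_mul_norm] at hv_inner
    nlinarith [norm_nonneg v]
  have huv : ⟪u, v⟫ = 0 := by
    have h1 := hφskew u u
    have h2 := real_inner_comm u (φ u)
    show ⟪u, φ u⟫ = 0
    linarith
  have hv_eig : h v = (-lam) • v := by
    have h1 := hanticomm u
    rw [hu_eig, map_smul] at h1
    show h (φ u) = (-lam) • φ u
    rw [neg_smul]
    exact eq_neg_of_add_eq_zero_left h1
  obtain ⟨μ, hμ, e1, e2, hn1, hn2, hp1, hp2, h12, he1, he2⟩ :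
      ∃ μ : ℝ, 0 ≤ μ ∧ ∃ e1 e2 : V, ‖e1‖ = 1 ∧ ‖e2‖ = 1 ∧ ⟪R, e1⟫ = 0 ∧ ⟪R, e2⟫ = 0 ∧
        ⟪e1, e2⟫ = 0 ∧ h e1 = μ • e1 ∧ h e2 = -μ • e2 := by
    rcases le_or_gt 0 lam with hl | hl
    · exact ⟨lam, hl, u, v, hu_norm, hv_norm, hu_perp, hv_perp, huv, hu_eig, hv_eig⟩
    · refine ⟨-lam, by linarith, v, u, hv_norm, hu_norm, hv_perp, hu_perp,
        by rw [real_inner_comm]; exact huv, hv_eig, ?_⟩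
      rw [hu_eig, neg_neg]
  have hp1' : ⟪e1, R⟫ = 0 := by rw [real_inner_comm]; exact hp1
  have hp2' : ⟪e2, R⟫ = 0 := by rw [real_inner_comm]; exact hp2
  have h12' : ⟪e2, e1⟫ = 0 := by rw [real_inner_comm]; exact h12
  set f : Fin 3 → V := ![R, e1, e2] with hf
  have horth : Orthonormal ℝ f := by
    rw [orthonormal_iff_ite]
    intro i j
    fin_cases i <;> fin_cases j <;>
      simp [hf, real_inner_self_eq_norm_mul_norm, hRunit, hn1, hn2, hp1, hp2, h12, hp1', hp2', h12']
  have hcard : Fintype.card (Fin 3) = Module.finrank ℝ V := by simp [hdim]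
  set b0 : Module.Basis (Fin 3) ℝ V :=
    basisOfLinearIndependentOfCardEqFinrank horth.linearIndependent hcard with hb0def
  have hb0coe : ⇑b0 = f := coe_basisOfLinearIndependentOfCardEqFinrank _ _
  set b : OrthonormalBasis (Fin 3) ℝ V := b0.toOrthonormalBasis (by rwa [hb0coe]) with hbdef
  have hbcoe : ⇑b = f := by rw [hbdef, Module.Basis.coe_toOrthonormalBasis, hb0coe]
  have hb0 : b 0 = R := by rw [hbcoe]; rfl
  have hb1 : b 1 = e1 := by rw [hbcoe]; rfl
  have hb2 : b 2 = e2 := by rw [hbcoe]; rfl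
  have hadj : LinearMap.adjoint h = h := ((LinearMap.eq_adjoint_iff h h).mpr hsymm).symm
  refine ⟨μ, hμ, ⟨b, by rw [hb0, hhR], by rw [hb1, he1], by rw [hb2, he2]⟩, ?_⟩
  rw [hadj, LinearMap.trace_eq_matrix_trace ℝ b.toBasis, Matrix.trace]
  simp only [Matrix.diag, LinearMap.toMatrix_apply, OrthonormalBasis.coe_toBasis,
    OrthonormalBasis.coe_toBasis_repr_apply, OrthonormalBasis.repr_apply_apply,
    LinearMap.comp_apply]
  rw [Fin.sum_univ_three, hb0, hb1, hb2, hhR, map_zero, he1, he2]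
  simp only [map_smul, he1, he2, inner_smul_right, inner_zero_right, smul_smul]
  rw [real_inner_self_eq_norm_mul_norm, real_inner_self_eq_norm_mul_norm, hn1, hn2]
  ring
end

section
/- Let L ∈ SL(2,ℤ) be hyperbolic with eigenvalue λ, |λ| > 1. On the mapping torus 𝕋²_L with the suspension metric dt² + λ^{2t} dx₊² + λ^{-2t} dx₋² and cosymplectic structure (τ dt, V dx dy), the torsion ‖L_R g‖² equals the constant 8(τ⁻¹ ln|λ|)² and the Chern–Hamilton energy equals 8Vτ⁻¹(ln|λ|)². -/
open MeasureTheory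

namespace MappingTorusEnergy

/-- The coordinate frame `(∂_t, ∂_{x₊}, ∂_{x₋})` on `ℝ³ = ℝ × ℝ × ℝ`. -/
noncomputable def e : Fin 3 → ℝ × ℝ × ℝ := ![(1, 0, 0), (0, 1, 0), (0, 0, 1)]

/-- Lie bracket of vector fields on `ℝ³` in global coordinates. -/
noncomputable def lieBracketVF (X Y : ℝ × ℝ × ℝ → ℝ × ℝ × ℝ) : ℝ × ℝ × ℝ → ℝ × ℝ × ℝ :=
  fun p => fderiv ℝ Y p (X p) - fderiv ℝ X p (Y p)

/-- The suspension metric `dt² + λ^{2t} dx₊² + λ^{-2t} dx₋²` (with `λ^{2t} = |λ|^{2t}`). -/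
noncomputable def gsusp (lam : ℝ) (p v w : ℝ × ℝ × ℝ) : ℝ :=
  v.1 * w.1 + |lam| ^ (2 * p.1) * v.2.1 * w.2.1 + |lam| ^ (-(2 * p.1)) * v.2.2 * w.2.2

/-- The Reeb field `R = τ⁻¹ ∂_t` of the cosymplectic structure `(τ dt, V dx ∧ dy)`. -/
noncomputable def Rf (τ : ℝ) : ℝ × ℝ × ℝ → ℝ × ℝ × ℝ := fun _ => (τ⁻¹, 0, 0)

/-- The components `(L_R g)_{ij} = R(g(e_i,e_j)) - g([R,e_i],e_j) - g(e_i,[R,e_j])`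
of the Lie derivative of the metric in the coordinate frame. -/
noncomputable def LRgComp (lam τ : ℝ) (i j : Fin 3) (p : ℝ × ℝ × ℝ) : ℝ :=
  fderiv ℝ (fun q => gsusp lam q (e i) (e j)) p (Rf τ p)
    - gsusp lam p (lieBracketVF (Rf τ) (fun _ => e i) p) (e j)
    - gsusp lam p (e i) (lieBracketVF (Rf τ) (fun _ => e j) p)

/-- Matrix of the metric in the coordinate frame. -/
noncomputable def Gmat (lam : ℝ) (p : ℝ × ℝ × ℝ) : Matrix (Fin 3) (Fin 3) ℝ :=
  Matrix.of fun i j => gsusp lam p (e i) (e j)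

/-- Matrix of `L_R g` in the coordinate frame. -/
noncomputable def Amat (lam τ : ℝ) (p : ℝ × ℝ × ℝ) : Matrix (Fin 3) (Fin 3) ℝ :=
  Matrix.of fun i j => LRgComp lam τ i j p

/-- The scalar torsion `‖L_R g‖² = gⁱᵏ gʲˡ (L_R g)_{ij} (L_R g)_{kl}
= trace ((G⁻¹ A)²)`. -/
noncomputable def torsion (lam τ : ℝ) (p : ℝ × ℝ × ℝ) : ℝ :=
  Matrix.trace ((Gmat lam p)⁻¹ * Amat lam τ p * ((Gmat lam p)⁻¹ * Amat lam τ p))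

-- auxiliary lemmas

lemma hasFDerivAt_gsusp (lam : ℝ) (h : 0 < |lam|) (v w p : ℝ × ℝ × ℝ) :
    HasFDerivAt (fun q => gsusp lam q v w)
      ((2 * Real.log |lam| *
          (|lam| ^ (2 * p.1) * v.2.1 * w.2.1 - |lam| ^ (-(2 * p.1)) * v.2.2 * w.2.2)) •
        (ContinuousLinearMap.fst ℝ ℝ (ℝ × ℝ))) p := by
  have hfst : HasFDerivAt (fun q : ℝ × ℝ × ℝ => q.1)
      (ContinuousLinearMap.fst ℝ ℝ (ℝ × ℝ)) p := hasFDerivAt_fst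
  have h1 : HasFDerivAt (fun q : ℝ × ℝ × ℝ => |lam| ^ (2 * q.1))
      ((|lam| ^ (2 * p.1) * Real.log |lam|) • ((2:ℝ) • ContinuousLinearMap.fst ℝ ℝ (ℝ × ℝ))) p :=
    ((hfst.const_mul (2:ℝ)).const_rpow h)
  have h2 : HasFDerivAt (fun q : ℝ × ℝ × ℝ => |lam| ^ (-(2 * q.1)))
      ((|lam| ^ (-(2 * p.1)) * Real.log |lam|) •
        ((-2:ℝ) • ContinuousLinearMap.fst ℝ ℝ (ℝ × ℝ))) p := by
    have := ((hfst.const_mul (-2:ℝ)).const_rpow h)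
    simp only [neg_mul] at this
    convert this using 1
  have H := (((h1.mul_const v.2.1).mul_const w.2.1).const_add (v.1 * w.1)).add
    ((h2.mul_const v.2.2).mul_const w.2.2)
  unfold gsusp
  refine H.congr_fderiv ?_
  refine ContinuousLinearMap.ext fun u => ?_
  simp [ContinuousLinearMap.smul_apply]
  ring

lemma bracket_const (τ : ℝ) (c p : ℝ × ℝ × ℝ) :
    lieBracketVF (Rf τ) (fun _ => c) p = 0 := by
  unfold lieBracketVF Rf
  rw [fderiv_fun_const, fderiv_fun_const]
  simp

lemma LRgComp_eq (lam : ℝ) (h : 0 < |lam|) (τ : ℝ) (i j : Fin 3) (p : ℝ × ℝ × ℝ) :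
    LRgComp lam τ i j p =
      τ⁻¹ * (2 * Real.log |lam| *
        (|lam| ^ (2 * p.1) * (e i).2.1 * (e j).2.1
          - |lam| ^ (-(2 * p.1)) * (e i).2.2 * (e j).2.2)) := by
  unfold LRgComp
  rw [(hasFDerivAt_gsusp lam h (e i) (e j) p).fderiv, bracket_const, bracket_const]
  simp [gsusp, Rf]
  ring

lemma Gmat_eq (lam : ℝ) (p : ℝ × ℝ × ℝ) :
    Gmat lam p = Matrix.diagonal ![1, |lam| ^ (2 * p.1), |lam| ^ (-(2 * p.1))] := by
  ext i j
  fin_cases i <;> fin_cases j <;>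
    simp [Gmat, gsusp, e, Matrix.diagonal]

lemma Amat_eq (lam : ℝ) (h : 0 < |lam|) (τ : ℝ) (p : ℝ × ℝ × ℝ) :
    Amat lam τ p = Matrix.diagonal
      ![0, τ⁻¹ * (2 * Real.log |lam|) * |lam| ^ (2 * p.1),
        -(τ⁻¹ * (2 * Real.log |lam|) * |lam| ^ (-(2 * p.1)))] := by
  ext i j
  fin_cases i <;> fin_cases j <;>
    simp [Amat, LRgComp_eq lam h τ, e, Matrix.diagonal] <;> ring

lemma torsion_eq (lam τ : ℝ) (hlam : 1 < |lam|) (p : ℝ × ℝ × ℝ) :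
    torsion lam τ p = 8 * (τ⁻¹ * Real.log |lam|) ^ 2 := by
  have h : 0 < |lam| := lt_trans one_pos hlam
  have hApos : 0 < |lam| ^ (2 * p.1) := Real.rpow_pos_of_pos h _
  have hA : |lam| ^ (2 * p.1) ≠ 0 := hApos.ne'
  have hAA : |lam| ^ (2 * p.1) * |lam| ^ (-(2 * p.1)) = 1 := by
    rw [← Real.rpow_add h]; simp
  have hGinv : (Gmat lam p)⁻¹ =
      Matrix.diagonal ![1, |lam| ^ (-(2 * p.1)), |lam| ^ (2 * p.1)] := by
    apply Matrix.inv_eq_right_inv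
    rw [Gmat_eq, Matrix.diagonal_mul_diagonal]
    ext i j
    fin_cases i <;> fin_cases j <;>
      simp [Matrix.diagonal, hAA, mul_comm (|lam| ^ (-(2 * p.1)))]
  unfold torsion
  rw [hGinv, Amat_eq lam h, Matrix.diagonal_mul_diagonal, Matrix.diagonal_mul_diagonal,
    Matrix.trace_diagonal]
  simp only [Fin.sum_univ_three, Pi.mul_apply]
  simp [Matrix.cons_val_zero, Matrix.cons_val_one]
  linear_combination (8 * Real.log lam ^ 2 * τ⁻¹ ^ 2 *
    (|lam| ^ (2 * p.1) * |lam| ^ (-(2 * p.1)) + 1)) * hAA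

end MappingTorusEnergy

open MappingTorusEnergy in
/-- Let `L ∈ SL(2,ℤ)` be hyperbolic with eigenvalue `λ`, `|λ| > 1`.  On
the mapping torus `𝕋²_L` with suspension metric `dt² + λ^{2t} dx₊² + λ^{-2t} dx₋²` and
cosymplectic structure `(τ dt, V dx ∧ dy)` (so that `α ∧ β = τ dt ∧ dx₊ ∧ dx₋` in the
eigencoordinates, and a fundamental domain is `[0,1] × S` with `S` of area `V`), the
torsion `‖L_R g‖²` is the constant `8 (τ⁻¹ ln|λ|)²` and the Chern–Hamilton energy
`E(g) = ∫ ‖L_R g‖² α ∧ β` equals `8 V τ⁻¹ (ln|λ|)²`. -/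
theorem mappingTorus_torsion_and_energy
    (L : Matrix (Fin 2) (Fin 2) ℤ) (hdet : L.det = 1)
    (lam : ℝ) (heig : lam ^ 2 - (L.trace : ℝ) * lam + 1 = 0) (hlam : 1 < |lam|)
    (τ V : ℝ) (hτ : 0 < τ) (hV : 0 < V)
    (S : Set (ℝ × ℝ)) (hS : MeasurableSet S) (hSV : (volume S).toReal = V) :
    (∀ p : ℝ × ℝ × ℝ, torsion lam τ p = 8 * (τ⁻¹ * Real.log |lam|) ^ 2) ∧
    (∫ p in (Set.Icc (0:ℝ) 1) ×ˢ S, τ * torsion lam τ p ∂volume)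
      = 8 * V * τ⁻¹ * Real.log |lam| ^ 2 := by
  refine ⟨MappingTorusEnergy.torsion_eq lam τ hlam, ?_⟩
  simp only [MappingTorusEnergy.torsion_eq lam τ hlam]
  rw [setIntegral_const]
  have hvol : (volume ((Set.Icc (0:ℝ) 1) ×ˢ S)).toReal = V := by
    rw [Measure.volume_eq_prod, Measure.prod_prod, Real.volume_Icc,
      ENNReal.toReal_mul, hSV]
    norm_num
  rw [measureReal_def, hvol, smul_eq_mul]
  have hτ' : τ ≠ 0 := hτ.ne'
  field_simp
end

section
/- Let g₀ be an inner product on a finite-dimensional real vector space V, let R ∈ V be a unit vector, let φ be a g₀-skew endomorphism with φ(R) = 0 and φ² = -id + ⟨R,·⟩₀ R. Let H be a symmetric bilinear form with H(R,·) = 0 and H(φv, w) = H(v, φw) for all v, w. Define H⁺ by g₀(v, H⁺w) = H(v,w), g(t) = g₀(e^{tH⁺}·, ·), and φ(t) = φ e^{tH⁺}. Then for all t: g(t) is a positive-definite symmetric bilinear form, φ(t)² = -id + ⟨R,·⟩₀ R, and g(t)(φ(t)v, φ(t)w) = g(t)(v,w) - g₀(R,v)g₀(R,w). -/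
open scoped RealInnerProductSpace

open NormedSpace

lemma aux_conj_exp {A : Type*} [NormedRing A] [NormedAlgebra ℝ A] [CompleteSpace A]
    (a b : A) (h : b * a = -a * b) :
    b * exp a = exp (-a) * b := by
  have hn : ∀ n : ℕ, b * a ^ n = (-a) ^ n * b := by
    intro n; induction n with
    | zero => simp
    | succ n ih =>
      calc b * a ^ (n + 1) = (b * a) * a ^ n := by rw [pow_succ']; rw [← mul_assoc]
        _ = -a * (b * a ^ n) := by rw [h, mul_assoc]
        _ = -a * ((-a) ^ n * b) := by rw [ih]
        _ = (-a) ^ (n + 1) * b := by rw [pow_succ', ← mul_assoc]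
  rw [exp_eq_tsum (𝕂 := ℝ), ← (expSeries_summable' (𝕂 := ℝ) a).tsum_mul_left b,
      ← (expSeries_summable' (𝕂 := ℝ) (-a)).tsum_mul_right b]
  congr 1; funext n
  rw [mul_smul_comm, hn, smul_mul_assoc]

lemma aux_exp_apply_eq_self {V : Type*} [NormedAddCommGroup V] [NormedSpace ℝ V]
    [CompleteSpace V] (B : V →L[ℝ] V) (v : V) (h : B v = 0) :
    exp B v = v := by
  rw [exp_eq_tsum (𝕂 := ℝ)]
  have hs := expSeries_summable' (𝕂 := ℝ) B
  have h1 : (∑' n : ℕ, ((n.factorial : ℝ))⁻¹ • B ^ n) v = ∑' n : ℕ, (((n.factorial : ℝ))⁻¹ • B ^ n) v :=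
    ContinuousLinearMap.map_tsum (ContinuousLinearMap.apply ℝ V v) hs
  rw [h1, tsum_eq_single 0]
  · simp
  · intro n hn
    obtain ⟨m, rfl⟩ := Nat.exists_eq_succ_of_ne_zero hn
    simp [pow_succ, ContinuousLinearMap.mul_apply, h]


/-- Let `g₀ = ⟪·,·⟫` be an inner product on a finite-dimensional real
vector space `V`, `R` a unit vector, `φ` a `g₀`-skew endomorphism with `φ R = 0` and
`φ² = -id + ⟪R,·⟫ R`.  Let `H` be a symmetric bilinear form with `H(R,·) = 0` and
`H(φ v, w) = H(v, φ w)`, and let `H⁺` be defined by `⟪v, H⁺ w⟫ = H(v,w)`.  Define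
`g(t) = ⟪e^{tH⁺}·,·⟫` and `φ(t) = φ ∘ e^{tH⁺}`.  Then for all `t`: `g(t)` is a
positive-definite symmetric bilinear form, `φ(t)² = -id + ⟪R,·⟫ R`, and
`g(t)(φ(t)v, φ(t)w) = g(t)(v,w) - ⟪R,v⟫ ⟪R,w⟫`. -/
theorem compatible_metric_curve
    {V : Type*} [NormedAddCommGroup V] [InnerProductSpace ℝ V] [FiniteDimensional ℝ V]
    (R : V) (hR : ⟪R, R⟫ = 1)
    (φ : V →L[ℝ] V)
    (hφskew : ∀ v w : V, ⟪φ v, w⟫ = -⟪v, φ w⟫)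
    (hφR : φ R = 0)
    (hφ2 : ∀ v : V, φ (φ v) = -v + ⟪R, v⟫ • R)
    (H : V →ₗ[ℝ] V →ₗ[ℝ] ℝ)
    (Hsymm : ∀ v w : V, H v w = H w v)
    (hHR : ∀ w : V, H R w = 0)
    (hHφ : ∀ v w : V, H (φ v) w = H v (φ w))
    (Hp : V →L[ℝ] V) (hHp : ∀ v w : V, ⟪v, Hp w⟫ = H v w)
    (t : ℝ) :
    -- g(t) is symmetric
    (∀ v w : V, ⟪NormedSpace.exp (t • Hp) v, w⟫ = ⟪NormedSpace.exp (t • Hp) w, v⟫) ∧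
    -- g(t) is positive definite
    (∀ v : V, v ≠ 0 → 0 < ⟪NormedSpace.exp (t • Hp) v, v⟫) ∧
    -- φ(t)² = -id + ⟪R,·⟫ R
    (∀ v : V, φ (NormedSpace.exp (t • Hp) (φ (NormedSpace.exp (t • Hp) v)))
        = -v + ⟪R, v⟫ • R) ∧
    -- g(t)(φ(t)v, φ(t)w) = g(t)(v,w) - g₀(R,v) g₀(R,w)
    (∀ v w : V,
      ⟪NormedSpace.exp (t • Hp) (φ (NormedSpace.exp (t • Hp) v)),
          φ (NormedSpace.exp (t • Hp) w)⟫
        = ⟪NormedSpace.exp (t • Hp) v, w⟫ - ⟪R, v⟫ * ⟪R, w⟫) := by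
  -- Hp is symmetric
  have hHpsymm : ∀ v w : V, ⟪Hp v, w⟫ = ⟪v, Hp w⟫ := by
    intro v w
    rw [real_inner_comm, hHp, hHp, Hsymm]
  -- symmetry of exp(s • Hp) for any s
  have hexp_symm : ∀ s : ℝ, ∀ v w : V,
      ⟪NormedSpace.exp (s • Hp) v, w⟫ = ⟪v, NormedSpace.exp (s • Hp) w⟫ := by
    intro s
    have hsa : IsSelfAdjoint Hp :=
      ContinuousLinearMap.isSelfAdjoint_iff_isSymmetric.mpr hHpsymm
    have hsas : IsSelfAdjoint (s • Hp) := by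
      exact IsSelfAdjoint.smul (star_trivial s) hsa
    have : IsSelfAdjoint (NormedSpace.exp (s • Hp)) := hsas.exp
    exact ContinuousLinearMap.isSelfAdjoint_iff_isSymmetric.mp this
  letI : NormedAlgebra ℚ (V →L[ℝ] V) := NormedAlgebra.restrictScalars ℚ ℝ _
  set A := NormedSpace.exp (t • Hp) with hA
  set A' := NormedSpace.exp (-(t • Hp)) with hA'
  -- Hp R = 0
  have hHpR : Hp R = 0 := by
    have : ∀ v : V, ⟪v, Hp R⟫ = 0 := fun v => by rw [hHp, Hsymm, hHR]
    have h0 := this (Hp R)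
    rwa [inner_self_eq_zero] at h0
  have hAR : A R = R := by
    rw [hA]; exact aux_exp_apply_eq_self (t • Hp) R (by simp [hHpR])
  -- φ anticommutes with t • Hp
  have hanti : φ * (t • Hp) = -(t • Hp) * φ := by
    ext v
    apply ext_inner_left ℝ
    intro w
    have h1 : ⟪w, Hp (φ v)⟫ = -⟪w, φ (Hp v)⟫ := by
      rw [hHp, ← hHφ, ← hHp, hφskew]
    simp only [ContinuousLinearMap.mul_apply, ContinuousLinearMap.neg_apply,
      ContinuousLinearMap.smul_apply, map_smul, inner_smul_right, inner_neg_right, h1]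
    ring
  have hconj := aux_conj_exp (t • Hp) φ hanti
  have hanti' : φ * -(t • Hp) = -(-(t • Hp)) * φ := by
    rw [neg_neg, mul_neg, hanti, neg_mul, neg_neg]
  have hconj' := aux_conj_exp (-(t • Hp)) φ hanti'
  rw [neg_neg] at hconj'
  have hφA : ∀ v : V, φ (A v) = A' (φ v) := fun v =>
    congrArg (fun f : V →L[ℝ] V => f v) hconj
  have hAφ : ∀ v : V, A (φ v) = φ (A' v) := fun v =>
    (congrArg (fun f : V →L[ℝ] V => f v) hconj').symm
  have hA'A : ∀ v : V, A' (A v) = v := by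
    intro v
    have : A' * A = 1 := by
      rw [hA, hA', ← NormedSpace.exp_add_of_commute (Commute.refl (t • Hp)).neg_left]
      simp [NormedSpace.exp_zero]
    have := congrArg (fun f : V →L[ℝ] V => f v) this
    simpa [ContinuousLinearMap.mul_apply] using this
  have hAφA : ∀ v : V, A (φ (A v)) = φ v := fun v => by
    rw [hAφ, hA'A]
  refine ⟨fun v w => by rw [hexp_symm, real_inner_comm], ?_, ?_, ?_⟩
  · -- positivity
    intro v hv
    set B := NormedSpace.exp ((t / 2) • Hp) with hB
    have hBB : A = B * B := by
      rw [hA, hB, ← NormedSpace.exp_add_of_commute (Commute.refl ((t / 2) • Hp)),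
        ← add_smul]
      norm_num
    have hBv : B v ≠ 0 := by
      intro h0
      apply hv
      have hinv : NormedSpace.exp (-((t / 2) • Hp)) (B v) = v := by
        have : NormedSpace.exp (-((t / 2) • Hp)) * B = 1 := by
          rw [hB, ← NormedSpace.exp_add_of_commute (Commute.refl ((t / 2) • Hp)).neg_left]
          simp [NormedSpace.exp_zero]
        have := congrArg (fun f : V →L[ℝ] V => f v) this
        simpa [ContinuousLinearMap.mul_apply] using this
      rw [h0, map_zero] at hinv
      exact hinv.symm
    have : ⟪A v, v⟫ = ⟪B v, B v⟫ := by
      rw [hBB]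
      simp only [ContinuousLinearMap.mul_apply]
      rw [hexp_symm (t / 2)]
    rw [this]
    exact lt_of_le_of_ne real_inner_self_nonneg
      (fun h => hBv (inner_self_eq_zero.mp h.symm))
  · -- φ(t)² = -id + ⟪R,·⟫ R
    intro v
    rw [hAφA, hφ2]
  · -- compatibility
    intro v w
    rw [hAφA, hφskew, hφ2 (A w)]
    have hRAw : ⟪R, A w⟫ = ⟪R, w⟫ := by
      rw [← hexp_symm t R w, hAR]
    rw [inner_add_right, inner_neg_right, real_inner_smul_right, hRAw,
      hexp_symm t v w, real_inner_comm v R]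
    ring
end
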